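/- Let ℓ₁,…,ℓₙ and ℓ₁,…,ℓ_{n−1},ℓₙ' be two collections of differentiable functions ℝ^d → ℝ differing only in the last function, each convex and β-smooth, with ‖∇ℓₙ(w)‖ ≤ L and ‖∇ℓₙ'(w)‖ ≤ L for all w. Define f₁ = (1/n)·(Σ_{j=1}^{n−1} ℓⱼ + ℓₙ) and f₂ = (1/n)·(Σ_{j=1}^{n−1} ℓⱼ + ℓₙ'). Run gradient descent from a common initialization w₀ = ŵ₀: w_t = w_{t−1} − γ_t·∇f₁(w_{t−1}) and ŵ_t = ŵ_{t−1} − γ_t·∇f₂(ŵ_{t−1}), with step sizes 0 ≤ γ_t ≤ 2/β. Then ‖w_T − ŵ_T‖ ≤ (2L/n)·Σ_{t=1}^T γ_t; consequently, for every L-Lipschitz function ℓ : ℝ^d → ℝ, |ℓ(w_T) − ℓ(ŵ_T)| ≤ (2L²/n)·Σ_{t=1}^T γ_t. -/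

import Mathlib

open Finset


section Helpers

open InnerProductSpace

variable {F : Type*} [NormedAddCommGroup F] [InnerProductSpace ℝ F] [CompleteSpace F]

variable {F : Type*} [NormedAddCommGroup F] [InnerProductSpace ℝ F] [CompleteSpace F]

lemma fderiv_eq_inner_gradient (f : F → ℝ) (x v : F) :
    fderiv ℝ f x v = ⟪gradient f x, v⟫_ℝ := by
  have : toDual ℝ F (gradient f x) = fderiv ℝ f x := by
    rw [gradient, (toDual ℝ F).apply_symm_apply]
  rw [← this]; rfl

lemma hasDerivAt_line (f : F → ℝ) (hf : Differentiable ℝ f) (x h : F) (t : ℝ) :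
    HasDerivAt (fun s : ℝ => f (x + s • h)) ⟪gradient f (x + t • h), h⟫_ℝ t := by
  have hl : HasDerivAt (fun s : ℝ => x + s • h) h t := by
    simpa using ((hasDerivAt_id t).smul_const h).const_add x
  have := (hf (x + t • h)).hasFDerivAt.comp_hasDerivAt t hl
  exact this.congr_deriv (fderiv_eq_inner_gradient f _ h)

lemma grad_convex_ineq (f : F → ℝ) (hf : Differentiable ℝ f)
    (hc : ConvexOn ℝ Set.univ f) (x y : F) :
    ⟪gradient f x, y - x⟫_ℝ ≤ f y - f x := by
  set φ : ℝ → ℝ := fun t => f (x + t • (y - x)) with hφdef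
  have hφc : ConvexOn ℝ Set.univ φ := by
    have := hc.comp_affineMap (AffineMap.lineMap x y)
    have heq : φ = f ∘ (AffineMap.lineMap x y) := by
      funext t
      simp [φ, AffineMap.lineMap_apply]
      congr 1
      module
    rw [heq]
    simpa using this
  have hd : HasDerivAt φ ⟪gradient f x, y - x⟫_ℝ 0 := by
    simpa using hasDerivAt_line f hf x (y - x) 0
  have := hφc.le_slope_of_hasDerivAt (Set.mem_univ (0:ℝ)) (Set.mem_univ (1:ℝ))
    one_pos hd
  have hs : slope φ 0 1 = f y - f x := by
    simp [slope_def_field, φ]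
  linarith [this, hs.le, hs.ge]

lemma descent_lemma (f : F → ℝ) (hf : Differentiable ℝ f) {β : ℝ} (hβ : 0 < β)
    (hsm : ∀ u v, ‖gradient f u - gradient f v‖ ≤ β * ‖u - v‖) (x y : F) :
    f y ≤ f x + ⟪gradient f x, y - x⟫_ℝ + β / 2 * ‖y - x‖ ^ 2 := by
  set h : F := y - x with hh
  set c : ℝ := ⟪gradient f x, h⟫_ℝ with hcdef
  set q : ℝ := ‖h‖ ^ 2 with hq
  set φ : ℝ → ℝ := fun t => f (x + t • h) - (c * t + β * q / 2 * t ^ 2) with hφdef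
  have hd : ∀ t : ℝ, HasDerivAt φ
      (⟪gradient f (x + t • h), h⟫_ℝ - (c + β * q / 2 * (2 * t))) t := by
    intro t
    have h1 := hasDerivAt_line f hf x h t
    have h2 : HasDerivAt (fun t : ℝ => c * t + β * q / 2 * t ^ 2)
        (c + β * q / 2 * (2 * t)) t := by
      have := ((hasDerivAt_id t).const_mul c).add
        (((hasDerivAt_pow 2 t)).const_mul (β * q / 2))
      exact this.congr_deriv (by norm_num)
    exact h1.sub h2
  have hanti : AntitoneOn φ (Set.Icc 0 1) := by
    apply antitoneOn_of_deriv_nonpos (convex_Icc 0 1)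
    · exact (Continuous.continuousOn (by
        have : Continuous φ := by
          apply Continuous.sub
          · exact hf.continuous.comp (by continuity)
          · continuity
        exact this))
    · intro t ht
      exact (hd t).differentiableAt.differentiableWithinAt
    · intro t ht
      rw [(hd t).deriv]
      rw [interior_Icc] at ht
      have hb : ⟪gradient f (x + t • h) - gradient f x, h⟫_ℝ ≤ β * t * q := by
        calc ⟪gradient f (x + t • h) - gradient f x, h⟫_ℝ
            ≤ ‖gradient f (x + t • h) - gradient f x‖ * ‖h‖ :=
              real_inner_le_norm _ _
          _ ≤ (β * ‖(x + t • h) - x‖) * ‖h‖ := by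
              have := hsm (x + t • h) x
              exact mul_le_mul_of_nonneg_right this (norm_nonneg _)
          _ = β * t * q := by
              have : ‖(x + t • h) - x‖ = t * ‖h‖ := by
                simp [norm_smul, abs_of_pos ht.1]
              rw [this, hq]; ring
      have hbb : ⟪gradient f (x + t • h), h⟫_ℝ - c ≤ β * t * q := by
        rw [hcdef]
        rw [inner_sub_left] at hb
        linarith
      nlinarith [hbb]
  have h01 : φ 1 ≤ φ 0 := hanti (by norm_num) (by norm_num) zero_le_one
  have e0 : φ 0 = f x := by simp [φ]
  have e1 : φ 1 = f y - (c + β * q / 2) := by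
    have hxy : x + (1:ℝ) • h = y := by simp [hh]
    simp only [φ]; rw [hxy]; ring
  rw [e0, e1] at h01
  have : β * q / 2 = β / 2 * ‖y - x‖ ^ 2 := by rw [hq, hh]; ring
  linarith [h01, this.le, this.ge]

lemma grad_lower_bound (f : F → ℝ) (hf : Differentiable ℝ f)
    (hc : ConvexOn ℝ Set.univ f) {β : ℝ} (hβ : 0 < β)
    (hsm : ∀ u v, ‖gradient f u - gradient f v‖ ≤ β * ‖u - v‖) (x y : F) :
    f x + ⟪gradient f x, y - x⟫_ℝ + (2 * β)⁻¹ * ‖gradient f y - gradient f x‖ ^ 2 ≤ f y := by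
  set gd : F := gradient f y - gradient f x with hgd
  set z : F := y - β⁻¹ • gd with hz
  have hA := grad_convex_ineq f hf hc x z
  have hB := descent_lemma f hf hβ hsm y z
  have hzx : z - x = (y - x) - β⁻¹ • gd := by rw [hz]; abel
  have hzy : z - y = -(β⁻¹ • gd) := by rw [hz]; abel
  have e1 : ⟪gradient f x, z - x⟫_ℝ
      = ⟪gradient f x, y - x⟫_ℝ - β⁻¹ * ⟪gradient f x, gd⟫_ℝ := by
    rw [hzx, inner_sub_right, real_inner_smul_right]
  have e2 : ⟪gradient f y, z - y⟫_ℝ = -(β⁻¹ * ⟪gradient f y, gd⟫_ℝ) := by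
    rw [hzy, inner_neg_right, real_inner_smul_right]
  have e3 : ‖z - y‖ ^ 2 = β⁻¹ ^ 2 * ‖gd‖ ^ 2 := by
    rw [hzy, norm_neg, norm_smul]
    rw [Real.norm_eq_abs, abs_of_pos (by positivity : (0:ℝ) < β⁻¹)]
    ring
  have e4 : ⟪gradient f y, gd⟫_ℝ - ⟪gradient f x, gd⟫_ℝ = ‖gd‖ ^ 2 := by
    rw [← inner_sub_left, ← hgd, real_inner_self_eq_norm_sq]
  have e5 : β / 2 * (β⁻¹ ^ 2 * ‖gd‖ ^ 2) = (2 * β)⁻¹ * ‖gd‖ ^ 2 := by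
    field_simp
  have e6 : β⁻¹ * ‖gd‖ ^ 2 = (2 * β)⁻¹ * ‖gd‖ ^ 2 + (2 * β)⁻¹ * ‖gd‖ ^ 2 := by
    field_simp; ring
  rw [e1] at hA
  rw [e2, e3, e5] at hB
  have e4' : β⁻¹ * ⟪gradient f y, gd⟫_ℝ - β⁻¹ * ⟪gradient f x, gd⟫_ℝ
      = β⁻¹ * ‖gd‖ ^ 2 := by rw [← mul_sub, e4]
  linarith [hA, hB, e4', e6]

lemma grad_cocoercive (f : F → ℝ) (hf : Differentiable ℝ f)
    (hc : ConvexOn ℝ Set.univ f) {β : ℝ} (hβ : 0 < β)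
    (hsm : ∀ u v, ‖gradient f u - gradient f v‖ ≤ β * ‖u - v‖) (x y : F) :
    β⁻¹ * ‖gradient f y - gradient f x‖ ^ 2
      ≤ ⟪gradient f y - gradient f x, y - x⟫_ℝ := by
  have h1 := grad_lower_bound f hf hc hβ hsm x y
  have h2 := grad_lower_bound f hf hc hβ hsm y x
  have hrev : ‖gradient f x - gradient f y‖ = ‖gradient f y - gradient f x‖ :=
    norm_sub_rev _ _
  rw [hrev] at h2
  have e1 : ⟪gradient f y, x - y⟫_ℝ = -⟪gradient f y, y - x⟫_ℝ := by
    rw [← inner_neg_right]; congr 1; abel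
  rw [e1] at h2
  have e2 : ⟪gradient f y - gradient f x, y - x⟫_ℝ
      = ⟪gradient f y, y - x⟫_ℝ - ⟪gradient f x, y - x⟫_ℝ := inner_sub_left _ _ _
  have e6 : β⁻¹ * ‖gradient f y - gradient f x‖ ^ 2
      = (2 * β)⁻¹ * ‖gradient f y - gradient f x‖ ^ 2
        + (2 * β)⁻¹ * ‖gradient f y - gradient f x‖ ^ 2 := by
    field_simp; ring
  linarith [h1, h2, e2.le, e2.ge, e6.le, e6.ge]

lemma gd_step_contract (f : F → ℝ) (hf : Differentiable ℝ f)
    (hc : ConvexOn ℝ Set.univ f) {β : ℝ} (hβ : 0 < β)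
    (hsm : ∀ u v, ‖gradient f u - gradient f v‖ ≤ β * ‖u - v‖)
    {γ : ℝ} (hγ0 : 0 ≤ γ) (hγ : γ ≤ 2 / β) (u v : F) :
    ‖(u - γ • gradient f u) - (v - γ • gradient f v)‖ ≤ ‖u - v‖ := by
  set a : F := u - v with ha
  set b : F := gradient f u - gradient f v with hb
  have hco : β⁻¹ * ‖b‖ ^ 2 ≤ ⟪b, a⟫_ℝ := grad_cocoercive f hf hc hβ hsm v u
  have hre : (u - γ • gradient f u) - (v - γ • gradient f v) = a - γ • b := by
    rw [ha, hb]; module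
  rw [hre]
  have hsq : ‖a - γ • b‖ ^ 2 = ‖a‖ ^ 2 - 2 * γ * ⟪b, a⟫_ℝ + γ ^ 2 * ‖b‖ ^ 2 := by
    rw [norm_sub_sq_real, norm_smul, real_inner_smul_right,
      Real.norm_eq_abs, abs_of_nonneg hγ0, real_inner_comm]
    ring
  have key : ‖a - γ • b‖ ^ 2 ≤ ‖a‖ ^ 2 := by
    have hne : 0 ≤ γ * (2 / β - γ) := mul_nonneg hγ0 (sub_nonneg.2 hγ)
    have h2b : 2 / β = 2 * β⁻¹ := by ring
    rw [hsq]
    have h1 : 2 * γ * (β⁻¹ * ‖b‖ ^ 2) ≤ 2 * γ * ⟪b, a⟫_ℝ :=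
      mul_le_mul_of_nonneg_left hco (by positivity)
    have h2 : 0 ≤ (γ * (2 * β⁻¹ - γ)) * ‖b‖ ^ 2 :=
      mul_nonneg (by rw [← h2b]; exact hne) (sq_nonneg _)
    nlinarith [h1, h2]
  nlinarith [key, norm_nonneg (a - γ • b), norm_nonneg a]

end Helpers

/-- **Uniform stability of gradient descent for convex smooth losses.** Running GD with
step sizes `γ_t ≤ 2/β` from a common initialization on two empirical risks built from `n`
convex `β`-smooth losses differing only in the last loss (whose gradients are bounded by
`L`) yields iterates with `‖w_T − wh_T‖ ≤ (2L/n)·Σ_{t=1}^T γ_t`, and hence every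
`L`-Lipschitz loss differs at the two iterates by at most `(2L²/n)·Σ_{t=1}^T γ_t`. -/
theorem gd_stability_convex (d n : ℕ) (hn : 1 ≤ n) (L β : ℝ) (hβ : 0 < β)
    (g : Fin (n - 1) → EuclideanSpace ℝ (Fin d) → ℝ)
    (ℓn ℓn' : EuclideanSpace ℝ (Fin d) → ℝ)
    (hdiffg : ∀ j, Differentiable ℝ (g j))
    (hdiffn : Differentiable ℝ ℓn)
    (hdiffn' : Differentiable ℝ ℓn')
    (hconvg : ∀ j, ConvexOn ℝ Set.univ (g j))
    (hconvn : ConvexOn ℝ Set.univ ℓn)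
    (hconvn' : ConvexOn ℝ Set.univ ℓn')
    (hsmg : ∀ j u v, ‖gradient (g j) u - gradient (g j) v‖ ≤ β * ‖u - v‖)
    (hsmn : ∀ u v, ‖gradient ℓn u - gradient ℓn v‖ ≤ β * ‖u - v‖)
    (hsmn' : ∀ u v, ‖gradient ℓn' u - gradient ℓn' v‖ ≤ β * ‖u - v‖)
    (hgradn : ∀ w, ‖gradient ℓn w‖ ≤ L)
    (hgradn' : ∀ w, ‖gradient ℓn' w‖ ≤ L)
    (f₁ f₂ : EuclideanSpace ℝ (Fin d) → ℝ)
    (hf₁ : f₁ = fun w => (1 / (n : ℝ)) * (∑ j, g j w + ℓn w))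
    (hf₂ : f₂ = fun w => (1 / (n : ℝ)) * (∑ j, g j w + ℓn' w))
    (γ : ℕ → ℝ) (hγ0 : ∀ t, 0 ≤ γ t) (hγ : ∀ t, γ t ≤ 2 / β)
    (w wh : ℕ → EuclideanSpace ℝ (Fin d))
    (h0 : w 0 = wh 0)
    (hw : ∀ t, w (t + 1) = w t - γ (t + 1) • gradient f₁ (w t))
    (hwh : ∀ t, wh (t + 1) = wh t - γ (t + 1) • gradient f₂ (wh t))
    (T : ℕ) :
    ‖w T - wh T‖ ≤ (2 * L / (n : ℝ)) * ∑ t ∈ Finset.Icc 1 T, γ t ∧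
      ∀ ℓ : EuclideanSpace ℝ (Fin d) → ℝ, (∀ x y, |ℓ x - ℓ y| ≤ L * ‖x - y‖) →
        |ℓ (w T) - ℓ (wh T)| ≤ (2 * L ^ 2 / (n : ℝ)) * ∑ t ∈ Finset.Icc 1 T, γ t := by
  classical
  have hne : (0:ℝ) < (n:ℝ) := by exact_mod_cast hn
  have hL0 : 0 ≤ L := le_trans (norm_nonneg _) (hgradn 0)
  -- gradient formulas
  have hgrad₁ : ∀ x : EuclideanSpace ℝ (Fin d), gradient f₁ x
      = (1/(n:ℝ)) • (∑ j, gradient (g j) x + gradient ℓn x) := by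
    intro x
    have hs : HasFDerivAt (fun w : EuclideanSpace ℝ (Fin d) => ∑ j, g j w)
        (∑ j, fderiv ℝ (g j) x) x :=
      HasFDerivAt.fun_sum (fun j _ => (hdiffg j x).hasFDerivAt)
    have hfd : HasFDerivAt (fun w : EuclideanSpace ℝ (Fin d) => ∑ j, g j w + ℓn w)
        (∑ j, fderiv ℝ (g j) x + fderiv ℝ ℓn x) x := hs.add (hdiffn x).hasFDerivAt
    have hfd₁ : HasFDerivAt f₁
        ((1/(n:ℝ)) • (∑ j, fderiv ℝ (g j) x + fderiv ℝ ℓn x)) x := by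
      rw [hf₁]; exact hfd.const_mul (1/(n:ℝ))
    have := hfd₁.hasGradientAt.gradient
    rw [this]
    simp only [map_smul, map_add, map_sum]
    rfl
  have hgrad₂ : ∀ x : EuclideanSpace ℝ (Fin d), gradient f₂ x
      = (1/(n:ℝ)) • (∑ j, gradient (g j) x + gradient ℓn' x) := by
    intro x
    have hs : HasFDerivAt (fun w : EuclideanSpace ℝ (Fin d) => ∑ j, g j w)
        (∑ j, fderiv ℝ (g j) x) x :=
      HasFDerivAt.fun_sum (fun j _ => (hdiffg j x).hasFDerivAt)
    have hfd : HasFDerivAt (fun w : EuclideanSpace ℝ (Fin d) => ∑ j, g j w + ℓn' w)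
        (∑ j, fderiv ℝ (g j) x + fderiv ℝ ℓn' x) x := hs.add (hdiffn' x).hasFDerivAt
    have hfd₂ : HasFDerivAt f₂
        ((1/(n:ℝ)) • (∑ j, fderiv ℝ (g j) x + fderiv ℝ ℓn' x)) x := by
      rw [hf₂]; exact hfd.const_mul (1/(n:ℝ))
    have := hfd₂.hasGradientAt.gradient
    rw [this]
    simp only [map_smul, map_add, map_sum]
    rfl
  -- differentiability
  have hdf₁ : Differentiable ℝ f₁ := by
    rw [hf₁]
    exact fun x => (((Differentiable.fun_sum (fun j _ => hdiffg j)).add hdiffn) x).const_mul _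
  have hdf₂ : Differentiable ℝ f₂ := by
    rw [hf₂]
    exact fun x => (((Differentiable.fun_sum (fun j _ => hdiffg j)).add hdiffn') x).const_mul _
  -- convexity
  have hsumconv : ConvexOn ℝ Set.univ (fun w : EuclideanSpace ℝ (Fin d) => ∑ j, g j w) := by
    have : ConvexOn ℝ Set.univ (∑ j, g j) := by
      apply Finset.sum_induction g (fun h => ConvexOn ℝ Set.univ h)
      · exact fun a b ha hb => ha.add hb
      · exact convexOn_const 0 convex_univ
      · exact fun j _ => hconvg j
    have heq : (∑ j, g j) = (fun w : EuclideanSpace ℝ (Fin d) => ∑ j, g j w) := by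
      funext w; simp
    rwa [heq] at this
  have hconv : ∀ (ℓ : EuclideanSpace ℝ (Fin d) → ℝ), ConvexOn ℝ Set.univ ℓ →
      ConvexOn ℝ Set.univ (fun w : EuclideanSpace ℝ (Fin d) => (1/(n:ℝ)) * (∑ j, g j w + ℓ w)) := by
    intro ℓ hℓ
    have h1 : ConvexOn ℝ Set.univ (fun w : EuclideanSpace ℝ (Fin d) => ∑ j, g j w + ℓ w) := hsumconv.add hℓ
    have h2 := h1.smul (c := 1/(n:ℝ)) (by positivity)
    simpa [smul_eq_mul] using h2
  have hconv₁ : ConvexOn ℝ Set.univ f₁ := by rw [hf₁]; exact hconv ℓn hconvn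
  have hconv₂ : ConvexOn ℝ Set.univ f₂ := by rw [hf₂]; exact hconv ℓn' hconvn'
  -- smoothness of f₁, f₂
  have hsmooth : ∀ (ℓ : EuclideanSpace ℝ (Fin d) → ℝ), (∀ u v, ‖gradient ℓ u - gradient ℓ v‖ ≤ β * ‖u - v‖) →
      ∀ u v : EuclideanSpace ℝ (Fin d), ‖(1/(n:ℝ)) • (∑ j, gradient (g j) u + gradient ℓ u)
        - (1/(n:ℝ)) • (∑ j, gradient (g j) v + gradient ℓ v)‖ ≤ β * ‖u - v‖ := by
    intro ℓ hℓ u v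
    have e : (1/(n:ℝ)) • (∑ j, gradient (g j) u + gradient ℓ u)
        - (1/(n:ℝ)) • (∑ j, gradient (g j) v + gradient ℓ v)
        = (1/(n:ℝ)) • ((∑ j, (gradient (g j) u - gradient (g j) v))
            + (gradient ℓ u - gradient ℓ v)) := by
      rw [← smul_sub]
      congr 1
      rw [Finset.sum_sub_distrib]
      abel
    rw [e, norm_smul]
    have hbound : ‖(∑ j, (gradient (g j) u - gradient (g j) v))
        + (gradient ℓ u - gradient ℓ v)‖ ≤ (n:ℝ) * (β * ‖u - v‖) := by
      calc ‖(∑ j, (gradient (g j) u - gradient (g j) v)) + (gradient ℓ u - gradient ℓ v)‖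
          ≤ ‖∑ j, (gradient (g j) u - gradient (g j) v)‖ + ‖gradient ℓ u - gradient ℓ v‖ :=
            norm_add_le _ _
        _ ≤ (∑ _j : Fin (n-1), β * ‖u - v‖) + β * ‖u - v‖ := by
            gcongr
            · exact norm_sum_le_of_le _ (fun j _ => hsmg j u v)
            · exact hℓ u v
        _ = (n:ℝ) * (β * ‖u - v‖) := by
            rw [Finset.sum_const, nsmul_eq_mul, Finset.card_univ, Fintype.card_fin,
              Nat.cast_sub hn]
            push_cast
            ring
    calc ‖(1/(n:ℝ))‖ * ‖(∑ j, (gradient (g j) u - gradient (g j) v))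
          + (gradient ℓ u - gradient ℓ v)‖
        ≤ (1/(n:ℝ)) * ((n:ℝ) * (β * ‖u - v‖)) := by
          rw [Real.norm_eq_abs, abs_of_pos (by positivity)]
          exact mul_le_mul_of_nonneg_left hbound (by positivity)
      _ = β * ‖u - v‖ := by field_simp
  have hsm₁ : ∀ u v : EuclideanSpace ℝ (Fin d), ‖gradient f₁ u - gradient f₁ v‖ ≤ β * ‖u - v‖ := by
    intro u v; rw [hgrad₁, hgrad₁]; exact hsmooth ℓn hsmn u v
  have hsm₂ : ∀ u v : EuclideanSpace ℝ (Fin d), ‖gradient f₂ u - gradient f₂ v‖ ≤ β * ‖u - v‖ := by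
    intro u v; rw [hgrad₂, hgrad₂]; exact hsmooth ℓn' hsmn' u v
  -- gradient difference bound
  have hdiffbound : ∀ v : EuclideanSpace ℝ (Fin d), ‖gradient f₁ v - gradient f₂ v‖ ≤ 2 * L / (n:ℝ) := by
    intro v
    rw [hgrad₁, hgrad₂]
    have e : (1/(n:ℝ)) • (∑ j, gradient (g j) v + gradient ℓn v)
        - (1/(n:ℝ)) • (∑ j, gradient (g j) v + gradient ℓn' v)
        = (1/(n:ℝ)) • (gradient ℓn v - gradient ℓn' v) := by
      rw [← smul_sub]; congr 1; abel
    rw [e, norm_smul, Real.norm_eq_abs, abs_of_pos (by positivity)]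
    have : ‖gradient ℓn v - gradient ℓn' v‖ ≤ 2 * L := by
      calc ‖gradient ℓn v - gradient ℓn' v‖ ≤ ‖gradient ℓn v‖ + ‖gradient ℓn' v‖ :=
            norm_sub_le _ _
        _ ≤ 2 * L := by linarith [hgradn v, hgradn' v]
    calc (1/(n:ℝ)) * ‖gradient ℓn v - gradient ℓn' v‖
        ≤ (1/(n:ℝ)) * (2 * L) := mul_le_mul_of_nonneg_left this (by positivity)
      _ = 2 * L / (n:ℝ) := by ring
  -- main induction
  have main : ∀ S : ℕ, ‖w S - wh S‖ ≤ (2 * L / (n:ℝ)) * ∑ t ∈ Finset.Icc 1 S, γ t := by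
    intro S
    induction S with
    | zero => simp [h0]
    | succ T ih =>
      have hstep : ‖w (T+1) - wh (T+1)‖ ≤ ‖w T - wh T‖ + γ (T+1) * (2 * L / (n:ℝ)) := by
        rw [hw T, hwh T]
        have hsplit : (w T - γ (T+1) • gradient f₁ (w T))
            - (wh T - γ (T+1) • gradient f₂ (wh T))
            = ((w T - γ (T+1) • gradient f₁ (w T)) - (wh T - γ (T+1) • gradient f₁ (wh T)))
              + γ (T+1) • (gradient f₂ (wh T) - gradient f₁ (wh T)) := by
          module
        rw [hsplit]
        calc ‖((w T - γ (T+1) • gradient f₁ (w T)) - (wh T - γ (T+1) • gradient f₁ (wh T)))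
              + γ (T+1) • (gradient f₂ (wh T) - gradient f₁ (wh T))‖
            ≤ ‖(w T - γ (T+1) • gradient f₁ (w T)) - (wh T - γ (T+1) • gradient f₁ (wh T))‖
              + ‖γ (T+1) • (gradient f₂ (wh T) - gradient f₁ (wh T))‖ := norm_add_le _ _
          _ ≤ ‖w T - wh T‖ + γ (T+1) * (2 * L / (n:ℝ)) := by
              gcongr
              · exact gd_step_contract f₁ hdf₁ hconv₁ hβ hsm₁ (hγ0 (T+1)) (hγ (T+1)) _ _
              · rw [norm_smul, Real.norm_eq_abs, abs_of_nonneg (hγ0 (T+1)),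
                  norm_sub_rev]
                exact mul_le_mul_of_nonneg_left (hdiffbound (wh T)) (hγ0 (T+1))
      have hsum : ∑ t ∈ Finset.Icc 1 (T+1), γ t = (∑ t ∈ Finset.Icc 1 T, γ t) + γ (T+1) :=
        Finset.sum_Icc_succ_top (Nat.succ_le_succ (Nat.zero_le T)) γ
      rw [hsum]
      calc ‖w (T+1) - wh (T+1)‖ ≤ ‖w T - wh T‖ + γ (T+1) * (2 * L / (n:ℝ)) := hstep
        _ ≤ (2 * L / (n:ℝ)) * ∑ t ∈ Finset.Icc 1 T, γ t + γ (T+1) * (2 * L / (n:ℝ)) := by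
            linarith [ih]
        _ = 2 * L / (n:ℝ) * ((∑ t ∈ Finset.Icc 1 T, γ t) + γ (T+1)) := by ring
  refine ⟨main T, ?_⟩
  intro ℓ hlip
  calc |ℓ (w T) - ℓ (wh T)| ≤ L * ‖w T - wh T‖ := hlip _ _
    _ ≤ L * ((2 * L / (n:ℝ)) * ∑ t ∈ Finset.Icc 1 T, γ t) :=
        mul_le_mul_of_nonneg_left (main T) hL0
    _ = (2 * L ^ 2 / (n:ℝ)) * ∑ t ∈ Finset.Icc 1 T, γ t := by ring
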